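/- Johnson–Lindenstrauss concentration: if R ∈ ℝ^{D'×D} has i.i.d. N(0, 1/D') entries, then for any fixed unit vector x ∈ ℝ^D and any 0 < ε < 1, Pr(|‖Rx‖₂² − 1| > ε) ≤ 2 exp(−D'(ε²/4 − ε³/6)). -/

import Mathlib

open MeasureTheory ProbabilityTheory
open Real
open scoped ENNReal NNReal

lemma jl_aux1 {v t c a : ℝ} (hv : 0 < v) (ht : 2 * t * c ^ 2 * v < 1) :
    ∫⁻ u : ℝ, ENNReal.ofReal (Real.exp (t * (a + c * u) ^ 2)) ∂(gaussianReal 0 v.toNNReal)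
      = ENNReal.ofReal (Real.exp (t * a ^ 2 / (1 - 2 * t * c ^ 2 * v))
          / Real.sqrt (1 - 2 * t * c ^ 2 * v)) := by
  have hvne : v.toNNReal ≠ 0 := by
    simp [Real.toNNReal_eq_zero, not_le, hv]
  have hvv : ((v.toNNReal : NNReal) : ℝ) = v := Real.coe_toNNReal _ hv.le
  set s : ℝ := 1 - 2 * t * c ^ 2 * v with hs_def
  have hs : 0 < s := by linarith
  set β : ℝ := s / (2 * v) with hβ_def
  have hβ : 0 < β := by positivity
  set m : ℝ := 2 * v * t * a * c / s with hm_def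
  set C : ℝ := (Real.sqrt (2 * π * v))⁻¹ * Real.exp (t * a ^ 2 / s) with hC_def
  have hπ : 0 < 2 * π * v := by positivity
  have key : ∀ u : ℝ, gaussianPDFReal 0 v.toNNReal u * Real.exp (t * (a + c * u) ^ 2)
      = C * Real.exp (-β * (u - m) ^ 2) := by
    intro u
    have e1 : ∀ k A B : ℝ, k * Real.exp A * Real.exp B = k * Real.exp (A + B) := by
      intro k A B; rw [mul_assoc, ← Real.exp_add]
    rw [gaussianPDFReal, hvv, hC_def, sub_zero, e1, e1]
    congr 1
    rw [Real.exp_eq_exp, hβ_def, hm_def]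
    have hs0 : s ≠ 0 := hs.ne'
    field_simp
    rw [hs_def]
    ring
  have hmeas : Measurable fun u : ℝ => ENNReal.ofReal (Real.exp (t * (a + c * u) ^ 2)) :=
    ENNReal.measurable_ofReal.comp (Real.measurable_exp.comp
      ((((measurable_id'.const_mul c).const_add a).pow_const 2).const_mul t))
  rw [gaussianReal_of_var_ne_zero _ hvne,
    lintegral_withDensity_eq_lintegral_mul _ (measurable_gaussianPDF _ _) hmeas]
  have : ∀ u : ℝ, (gaussianPDF 0 v.toNNReal * fun u : ℝ =>
      ENNReal.ofReal (Real.exp (t * (a + c * u) ^ 2))) u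
      = ENNReal.ofReal (C * Real.exp (-β * (u - m) ^ 2)) := by
    intro u
    simp only [Pi.mul_apply, gaussianPDF]
    rw [← ENNReal.ofReal_mul (gaussianPDFReal_nonneg _ _ _), key u]
  simp_rw [this]
  have hInt : Integrable (fun u : ℝ => C * Real.exp (-β * (u - m) ^ 2)) := by
    exact ((integrable_exp_neg_mul_sq hβ).comp_sub_right m).const_mul C
  rw [← ofReal_integral_eq_lintegral_ofReal hInt]
  · congr 1
    rw [integral_const_mul, integral_sub_right_eq_self (fun u => Real.exp (-β * u ^ 2)) m,
      integral_gaussian]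
    rw [hC_def]
    have h1 : π / β = 2 * π * v / s := by
      rw [hβ_def]; field_simp
    rw [h1, Real.sqrt_div hπ.le]
    have h2 : Real.sqrt (2 * π * v) ≠ 0 := by positivity
    field_simp
  · refine ae_of_all _ fun u => ?_
    have hC : 0 ≤ C := by rw [hC_def]; positivity
    positivity

lemma jl_aux3 {E : Type*} [MeasurableSpace E] (ν : Measure E) [SigmaFinite ν]
    (f : E → ℝ≥0∞) (hf : Measurable f) (n : ℕ) :
    ∫⁻ y : Fin n → E, ∏ i, f (y i) ∂(Measure.pi fun _ => ν) = (∫⁻ x, f x ∂ν) ^ n := by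
  induction n with
  | zero => simp
  | succ n ih =>
    have hmp := measurePreserving_piFinSuccAbove (fun _ : Fin (n + 1) => ν) 0
    set G : E × (Fin n → E) → ℝ≥0∞ := fun p => f p.1 * ∏ j, f (p.2 j) with hG_def
    have hG : Measurable G := by
      refine (hf.comp measurable_fst).mul ?_
      exact Finset.measurable_prod _ fun j _ =>
        hf.comp ((measurable_pi_apply j).comp measurable_snd)
    have hcomp := hmp.lintegral_comp hG
    have hLHS : ∀ z : Fin (n + 1) → E,
        (∏ i, f (z i)) = G (MeasurableEquiv.piFinSuccAbove (fun _ => E) 0 z) := by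
      intro z
      simp only [hG_def, MeasurableEquiv.piFinSuccAbove_apply, Fin.insertNthEquiv_symm_apply,
        Fin.removeNth, Fin.zero_succAbove]
      rw [Fin.prod_univ_succ]
    have hg : AEMeasurable (fun w : Fin n → E => ∏ j, f (w j)) (Measure.pi fun _ => ν) :=
      (Finset.measurable_prod Finset.univ fun j _ => hf.comp (measurable_pi_apply j)).aemeasurable
    calc ∫⁻ y : Fin (n + 1) → E, ∏ i, f (y i) ∂(Measure.pi fun _ => ν)
        = ∫⁻ b : E × (Fin n → E), f b.1 * ∏ j, f (b.2 j)
            ∂(ν.prod (Measure.pi fun _ => ν)) := by simp_rw [hLHS]; exact hcomp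
      _ = (∫⁻ x, f x ∂ν) * ∫⁻ y : Fin n → E, ∏ j, f (y j) ∂(Measure.pi fun _ => ν) :=
          lintegral_prod_mul hf.aemeasurable hg
      _ = (∫⁻ x, f x ∂ν) ^ (n + 1) := by rw [ih, pow_succ]; ring

lemma jl_aux2 {v : ℝ} (hv : 0 < v) :
    ∀ (n : ℕ) (x : Fin n → ℝ) (t a : ℝ), 2 * t * (∑ j, x j ^ 2) * v < 1 →
    ∫⁻ z : Fin n → ℝ, ENNReal.ofReal (Real.exp (t * (a + ∑ j, x j * z j) ^ 2))
        ∂(Measure.pi fun _ => gaussianReal 0 v.toNNReal)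
      = ENNReal.ofReal (Real.exp (t * a ^ 2 / (1 - 2 * t * (∑ j, x j ^ 2) * v))
          / Real.sqrt (1 - 2 * t * (∑ j, x j ^ 2) * v)) := by
  intro n
  induction n with
  | zero =>
    intro x t a h
    simp
  | succ n ih =>
    intro x t a h
    have hV'0 : (0:ℝ) ≤ ∑ j : Fin n, x j.succ ^ 2 :=
      Finset.sum_nonneg fun _ _ => sq_nonneg _
    have hVsplit : ∑ j, x j ^ 2 = x 0 ^ 2 + ∑ j : Fin n, x j.succ ^ 2 :=
      Fin.sum_univ_succ _
    have hS : 0 < 1 - 2 * t * (∑ j, x j ^ 2) * v := by linarith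
    have hlt : 2 * t * (∑ j : Fin n, x j.succ ^ 2) * v < 1 := by
      rcases le_or_gt t 0 with h' | h'
      · nlinarith [mul_nonneg hV'0 hv.le]
      · nlinarith [sq_nonneg (x 0), mul_pos h' hv]
    have hs' : 0 < 1 - 2 * t * (∑ j : Fin n, x j.succ ^ 2) * v := by linarith
    set s' : ℝ := 1 - 2 * t * (∑ j : Fin n, x j.succ ^ 2) * v with hs'_def
    set t' : ℝ := t / s' with ht'_def
    have hq : 1 - 2 * t' * (x 0) ^ 2 * v
        = (1 - 2 * t * (∑ j, x j ^ 2) * v) / s' := by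
      rw [ht'_def, hVsplit, hs'_def]
      have hs0 : 1 - 2 * t * (∑ j : Fin n, x j.succ ^ 2) * v ≠ 0 := hs'.ne'
      field_simp
      ring
    have hq0 : 0 < 1 - 2 * t' * (x 0) ^ 2 * v := by
      rw [hq]; exact div_pos hS hs'
    set G : ℝ × (Fin n → ℝ) → ℝ≥0∞ := fun p =>
      ENNReal.ofReal (Real.exp (t * ((a + x 0 * p.1) + ∑ j, x j.succ * p.2 j) ^ 2)) with hG_def
    have hsum_meas : Measurable fun p : ℝ × (Fin n → ℝ) => ∑ j, x j.succ * p.2 j :=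
      Finset.measurable_sum _ fun j _ =>
        ((measurable_pi_apply j).comp measurable_snd).const_mul _
    have hG : Measurable G := by
      refine ENNReal.measurable_ofReal.comp (Real.measurable_exp.comp ?_)
      exact ((((measurable_fst.const_mul (x 0)).const_add a).add hsum_meas).pow_const 2).const_mul t
    have hmp := measurePreserving_piFinSuccAbove
      (fun _ : Fin (n + 1) => gaussianReal 0 v.toNNReal) 0
    have hcomp := hmp.lintegral_comp hG
    have hLHS : ∀ z : Fin (n + 1) → ℝ,
        ENNReal.ofReal (Real.exp (t * (a + ∑ j, x j * z j) ^ 2))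
          = G (MeasurableEquiv.piFinSuccAbove (fun _ => ℝ) 0 z) := by
      intro z
      simp only [hG_def, MeasurableEquiv.piFinSuccAbove_apply, Fin.insertNthEquiv_symm_apply,
        Fin.removeNth, Fin.zero_succAbove]
      rw [Fin.sum_univ_succ]
      ring_nf
    simp_rw [hLHS]
    rw [hcomp, lintegral_prod _ hG.aemeasurable]
    have hinner : ∀ u : ℝ,
        ∫⁻ w : Fin n → ℝ, G (u, w) ∂(Measure.pi fun _ => gaussianReal 0 v.toNNReal)
          = ENNReal.ofReal (1 / Real.sqrt s')
            * ENNReal.ofReal (Real.exp (t' * (a + x 0 * u) ^ 2)) := by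
      intro u
      rw [hG_def]
      simp only
      rw [ih (fun j => x j.succ) t (a + x 0 * u) (by simpa using hlt)]
      rw [← ENNReal.ofReal_mul (by positivity)]
      rw [ht'_def, hs'_def]
      congr 1
      rw [mul_div_right_comm, one_div, ← div_eq_inv_mul]
    simp_rw [hinner]
    have hmeas2 : Measurable fun u : ℝ => ENNReal.ofReal (Real.exp (t' * (a + x 0 * u) ^ 2)) :=
      (((((measurable_id'.const_mul (x 0)).const_add a).pow_const 2).const_mul
        t').exp).ennreal_ofReal
    rw [lintegral_const_mul _ hmeas2]
    rw [jl_aux1 hv (by linarith)]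
    rw [← ENNReal.ofReal_mul (by positivity)]
    congr 1
    rw [hq]
    have h2 : Real.sqrt s' ≠ 0 := ne_of_gt (Real.sqrt_pos.mpr hs')
    rw [Real.sqrt_div hS.le]
    have h3 : t' * a ^ 2 / ((1 - 2 * t * (∑ j, x j ^ 2) * v) / s')
        = t * a ^ 2 / (1 - 2 * t * (∑ j, x j ^ 2) * v) := by
      rw [ht'_def]
      field_simp
    rw [h3]
    field_simp

lemma jl_chernoff {Ω : Type*} [MeasurableSpace Ω] (P : Measure Ω) (X : Ω → ℝ)
    (hX : Measurable X) (t b : ℝ) (ht : 0 ≤ t) :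
    P {ω | b ≤ X ω} ≤ ENNReal.ofReal (Real.exp (-(t * b)))
      * ∫⁻ ω, ENNReal.ofReal (Real.exp (t * X ω)) ∂P := by
  have hf : AEMeasurable (fun ω => ENNReal.ofReal (Real.exp (t * X ω))) P :=
    (ENNReal.measurable_ofReal.comp (Real.measurable_exp.comp (hX.const_mul t))).aemeasurable
  have h := mul_meas_ge_le_lintegral₀ hf (ENNReal.ofReal (Real.exp (t * b)))
  have hsub : {ω | b ≤ X ω} ⊆
      {ω | ENNReal.ofReal (Real.exp (t * b)) ≤ ENNReal.ofReal (Real.exp (t * X ω))} :=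
    fun ω hω => ENNReal.ofReal_le_ofReal (Real.exp_le_exp.mpr (mul_le_mul_of_nonneg_left hω ht))
  have hne : ENNReal.ofReal (Real.exp (t * b)) ≠ 0 := by
    simp [ENNReal.ofReal_eq_zero, not_le, Real.exp_pos]
  have hne' : ENNReal.ofReal (Real.exp (t * b)) ≠ ⊤ := ENNReal.ofReal_ne_top
  calc P {ω | b ≤ X ω}
      ≤ P {ω | ENNReal.ofReal (Real.exp (t * b)) ≤ ENNReal.ofReal (Real.exp (t * X ω))} :=
        measure_mono hsub
    _ = (ENNReal.ofReal (Real.exp (t * b)))⁻¹ * (ENNReal.ofReal (Real.exp (t * b))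
        * P {ω | ENNReal.ofReal (Real.exp (t * b)) ≤ ENNReal.ofReal (Real.exp (t * X ω))}) := by
        rw [← mul_assoc, ENNReal.inv_mul_cancel hne hne', one_mul]
    _ ≤ (ENNReal.ofReal (Real.exp (t * b)))⁻¹
        * ∫⁻ ω, ENNReal.ofReal (Real.exp (t * X ω)) ∂P := mul_le_mul_right h _
    _ = ENNReal.ofReal (Real.exp (-(t * b)))
        * ∫⁻ ω, ENNReal.ofReal (Real.exp (t * X ω)) ∂P := by
        rw [Real.exp_neg, ENNReal.ofReal_inv_of_pos (Real.exp_pos _)]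

lemma jl_key1 {ε : ℝ} (hε : 0 < ε) (hε1 : ε < 1) :
    1 + ε ≤ Real.exp (ε - ε ^ 2 / 2 + ε ^ 3 / 3) := by
  have hb := Real.exp_bound (x := ε) (by rw [abs_of_pos hε]; linarith) (n := 4) (by norm_num)
  rw [abs_of_pos hε] at hb
  have hsum : ∑ m ∈ Finset.range 4, ε ^ m / m.factorial = 1 + ε + ε ^ 2 / 2 + ε ^ 3 / 6 := by
    norm_num [Finset.sum_range_succ, Nat.factorial]
  rw [hsum] at hb
  have hb1 : 1 + ε + ε ^ 2 / 2 + ε ^ 3 / 6 - 5 * ε ^ 4 / 96 ≤ Real.exp ε := by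
    have := (abs_le.mp hb).1
    norm_num [Nat.factorial] at this ⊢
    linarith
  have h2 : 1 + (-(ε ^ 2 / 2) + ε ^ 3 / 3) ≤ Real.exp (-(ε ^ 2 / 2) + ε ^ 3 / 3) := by
    have := Real.add_one_le_exp (-(ε ^ 2 / 2) + ε ^ 3 / 3)
    linarith
  have hy0 : (0:ℝ) ≤ 1 + (-(ε ^ 2 / 2) + ε ^ 3 / 3) := by nlinarith
  have hT0 : (0:ℝ) ≤ 1 + ε + ε ^ 2 / 2 + ε ^ 3 / 6 - 5 * ε ^ 4 / 96 := by nlinarith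
  have h4 : (1 + ε + ε ^ 2 / 2 + ε ^ 3 / 6 - 5 * ε ^ 4 / 96)
      * (1 + (-(ε ^ 2 / 2) + ε ^ 3 / 3))
      ≤ Real.exp ε * Real.exp (-(ε ^ 2 / 2) + ε ^ 3 / 3) :=
    mul_le_mul hb1 h2 hy0 (Real.exp_pos _).le
  have h5 : Real.exp ε * Real.exp (-(ε ^ 2 / 2) + ε ^ 3 / 3)
      = Real.exp (ε - ε ^ 2 / 2 + ε ^ 3 / 3) := by
    rw [← Real.exp_add]; ring_nf
  have hpoly : 1 + ε ≤ (1 + ε + ε ^ 2 / 2 + ε ^ 3 / 6 - 5 * ε ^ 4 / 96)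
      * (1 + (-(ε ^ 2 / 2) + ε ^ 3 / 3)) := by
    nlinarith [pow_pos hε 4, pow_pos hε 5, pow_pos hε 6, pow_pos hε 7,
      pow_lt_one₀ hε.le hε1 (by norm_num : (3:ℕ) ≠ 0)]
  rw [h5] at h4
  linarith

lemma jl_key2 {ε : ℝ} (hε : 0 < ε) (hε1 : ε < 1) :
    (1 - ε) * Real.exp ε ≤ Real.exp (-(ε ^ 2 / 2) + ε ^ 3 / 3) := by
  have hb := Real.exp_bound (x := ε) (by rw [abs_of_pos hε]; linarith) (n := 4) (by norm_num)
  rw [abs_of_pos hε] at hb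
  have hsum : ∑ m ∈ Finset.range 4, ε ^ m / m.factorial = 1 + ε + ε ^ 2 / 2 + ε ^ 3 / 6 := by
    norm_num [Finset.sum_range_succ, Nat.factorial]
  rw [hsum] at hb
  have hb2 : Real.exp ε ≤ 1 + ε + ε ^ 2 / 2 + ε ^ 3 / 6 + 5 * ε ^ 4 / 96 := by
    have := (abs_le.mp hb).2
    norm_num [Nat.factorial] at this ⊢
    linarith
  have h2 : 1 + (-(ε ^ 2 / 2) + ε ^ 3 / 3) ≤ Real.exp (-(ε ^ 2 / 2) + ε ^ 3 / 3) := by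
    have := Real.add_one_le_exp (-(ε ^ 2 / 2) + ε ^ 3 / 3)
    linarith
  have h3 : (1 - ε) * Real.exp ε ≤ (1 - ε) * (1 + ε + ε ^ 2 / 2 + ε ^ 3 / 6 + 5 * ε ^ 4 / 96) :=
    mul_le_mul_of_nonneg_left hb2 (by linarith)
  have hpoly : (1 - ε) * (1 + ε + ε ^ 2 / 2 + ε ^ 3 / 6 + 5 * ε ^ 4 / 96)
      ≤ 1 + (-(ε ^ 2 / 2) + ε ^ 3 / 3) := by
    nlinarith [pow_pos hε 3, pow_pos hε 4, pow_pos hε 5]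
  linarith


/-- Johnson–Lindenstrauss concentration: if `R ∈ ℝ^{D'×D}` has i.i.d. `N(0, 1/D')`
entries, then for any fixed unit vector `x` and any `0 < ε < 1`,
`Pr(|‖Rx‖₂² − 1| > ε) ≤ 2 exp(−D'(ε²/4 − ε³/6))`. -/
theorem jl_concentration
    (D' D : ℕ) (hD' : 0 < D') (x : Fin D → ℝ) (hx : ∑ j, x j ^ 2 = 1)
    (ε : ℝ) (hε : 0 < ε) (hε1 : ε < 1) :
    (Measure.pi fun _ : Fin D' =>
        Measure.pi fun _ : Fin D => gaussianReal 0 (Real.toNNReal (1 / D')))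
      {R | |(∑ i, (∑ j, R i j * x j) ^ 2) - 1| > ε} ≤
      ENNReal.ofReal (2 * Real.exp (-(D' : ℝ) * (ε ^ 2 / 4 - ε ^ 3 / 6))) := by
  have hD : (0:ℝ) < (D' : ℝ) := Nat.cast_pos.mpr hD'
  have hD0 : (D' : ℝ) ≠ 0 := ne_of_gt hD
  have hv : (0:ℝ) < 1 / (D' : ℝ) := by positivity
  set v : ℝ := 1 / (D' : ℝ) with hv_def
  set μ : Measure (Fin D' → Fin D → ℝ) := Measure.pi fun _ : Fin D' =>
    Measure.pi fun _ : Fin D => gaussianReal 0 v.toNNReal with hμ_def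
  set X : (Fin D' → Fin D → ℝ) → ℝ := fun R => ∑ i, (∑ j, x j * R i j) ^ 2 with hX_def
  have hXswap : ∀ R : Fin D' → Fin D → ℝ, (∑ i, (∑ j, R i j * x j) ^ 2) = X R := by
    intro R
    exact Finset.sum_congr rfl fun i _ => by
      rw [Finset.sum_congr rfl fun j _ => mul_comm (R i j) (x j)]
  have hX : Measurable X := by
    refine Finset.measurable_sum _ fun i _ => ?_
    exact (Finset.measurable_sum _ fun j _ =>
      (by fun_prop : Measurable fun R : Fin D' → Fin D → ℝ => x j * R i j)).pow_const 2
  -- subset of union of tails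
  have hsub : {R : Fin D' → Fin D → ℝ | |(∑ i, (∑ j, R i j * x j) ^ 2) - 1| > ε}
      ⊆ {R | 1 + ε ≤ X R} ∪ {R | -(1 - ε) ≤ -X R} := by
    intro R hR
    simp only [Set.mem_setOf_eq, gt_iff_lt, hXswap R] at hR
    rcases lt_abs.mp hR with h | h
    · left; simp only [Set.mem_setOf_eq]; linarith
    · right; simp only [Set.mem_setOf_eq]; linarith
  refine le_trans (le_trans (measure_mono hsub) (measure_union_le _ _)) ?_
  -- the per-row integral machinery
  have hrow : ∀ t : ℝ, 2 * t * (∑ j, x j ^ 2) * v < 1 →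
      ∫⁻ R, ENNReal.ofReal (Real.exp (t * X R)) ∂μ
        = (ENNReal.ofReal (Real.exp (t * (0:ℝ) ^ 2 / (1 - 2 * t * (∑ j, x j ^ 2) * v))
            / Real.sqrt (1 - 2 * t * (∑ j, x j ^ 2) * v))) ^ D' := by
    intro t ht
    have hprod : ∀ R : Fin D' → Fin D → ℝ, ENNReal.ofReal (Real.exp (t * X R))
        = ∏ i, (fun y : Fin D → ℝ =>
            ENNReal.ofReal (Real.exp (t * ((0:ℝ) + ∑ j, x j * y j) ^ 2))) (R i) := by
      intro R
      rw [hX_def]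
      simp only [zero_add]
      rw [Finset.mul_sum, Real.exp_sum,
        ENNReal.ofReal_prod_of_nonneg fun i _ => (Real.exp_pos _).le]
    simp_rw [hprod]
    have hf : Measurable fun y : Fin D → ℝ =>
        ENNReal.ofReal (Real.exp (t * ((0:ℝ) + ∑ j, x j * y j) ^ 2)) := by
      refine Measurable.ennreal_ofReal (Measurable.exp ?_)
      exact (((Finset.measurable_sum _ fun j _ =>
        (by fun_prop : Measurable fun y : Fin D → ℝ => x j * y j)).const_add 0).pow_const 2).const_mul t
    rw [hμ_def, jl_aux3 _ _ hf D', jl_aux2 hv D x t 0 ht]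
  -- upper tail
  have hbound1 : μ {R | 1 + ε ≤ X R}
      ≤ ENNReal.ofReal (Real.exp (-(D' : ℝ) * (ε ^ 2 / 4 - ε ^ 3 / 6))) := by
    set t1 : ℝ := (D' : ℝ) * ε / (2 * (1 + ε)) with ht1_def
    have ht1 : 0 ≤ t1 := by positivity
    have hcond1 : 2 * t1 * (∑ j, x j ^ 2) * v < 1 := by
      rw [hx, ht1_def, hv_def]
      rw [show 2 * ((D':ℝ) * ε / (2 * (1 + ε))) * 1 * (1 / (D':ℝ)) = ε / (1 + ε) by
        field_simp]
      rw [div_lt_one (by linarith)]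
      linarith
    have hr1 : 1 - 2 * t1 * (∑ j, x j ^ 2) * v = 1 / (1 + ε) := by
      rw [hx, ht1_def, hv_def]
      field_simp
      ring
    refine le_trans (jl_chernoff μ X hX t1 (1 + ε) ht1) ?_
    rw [hrow t1 hcond1, hr1]
    rw [← ENNReal.ofReal_pow (by positivity), ← ENNReal.ofReal_mul (by positivity)]
    refine ENNReal.ofReal_le_ofReal ?_
    have e1 : t1 * (0:ℝ) ^ 2 / (1 / (1 + ε)) = 0 := by ring
    have e2 : (1:ℝ) / Real.sqrt (1 / (1 + ε)) = Real.sqrt (1 + ε) := by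
      rw [one_div, one_div, Real.sqrt_inv, inv_inv]
    have e3 : t1 * (1 + ε) = (D' : ℝ) * (ε / 2) := by
      rw [ht1_def]; field_simp
    rw [e1, Real.exp_zero, e2, e3]
    have e4 : Real.exp (-((D':ℝ) * (ε / 2))) = Real.exp (-(ε / 2)) ^ D' := by
      rw [← Real.exp_nat_mul]; congr 1; ring
    have e5 : Real.exp (-(D' : ℝ) * (ε ^ 2 / 4 - ε ^ 3 / 6))
        = Real.exp (-(ε ^ 2 / 4 - ε ^ 3 / 6)) ^ D' := by
      rw [← Real.exp_nat_mul]; congr 1; ring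
    rw [e4, e5, ← mul_pow]
    refine pow_le_pow_left₀ (by positivity) ?_ D'
    -- base inequality
    have hkey := jl_key1 hε hε1
    have h6 : Real.sqrt (1 + ε) ≤ Real.exp ((ε - ε ^ 2 / 2 + ε ^ 3 / 3) / 2) := by
      rw [Real.exp_half]
      exact Real.sqrt_le_sqrt hkey
    calc Real.exp (-(ε / 2)) * Real.sqrt (1 + ε)
        ≤ Real.exp (-(ε / 2)) * Real.exp ((ε - ε ^ 2 / 2 + ε ^ 3 / 3) / 2) :=
          mul_le_mul_of_nonneg_left h6 (Real.exp_pos _).le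
      _ = Real.exp (-(ε ^ 2 / 4 - ε ^ 3 / 6)) := by rw [← Real.exp_add]; congr 1; ring
  -- lower tail
  have hbound2 : μ {R | -(1 - ε) ≤ -X R}
      ≤ ENNReal.ofReal (Real.exp (-(D' : ℝ) * (ε ^ 2 / 4 - ε ^ 3 / 6))) := by
    set t2 : ℝ := (D' : ℝ) * ε / (2 * (1 - ε)) with ht2_def
    have h1ε : (0:ℝ) < 1 - ε := by linarith
    have ht2 : 0 ≤ t2 := by positivity
    have hcond2 : 2 * (-t2) * (∑ j, x j ^ 2) * v < 1 := by
      rw [hx]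
      nlinarith [hv.le]
    have hr2 : 1 - 2 * (-t2) * (∑ j, x j ^ 2) * v = 1 / (1 - ε) := by
      rw [hx, ht2_def, hv_def]
      field_simp
      ring
    have hchern := jl_chernoff μ (fun R => -X R) hX.neg t2 (-(1 - ε)) ht2
    have hneg : ∀ R : Fin D' → Fin D → ℝ, t2 * -X R = -t2 * X R := fun R => by ring
    simp_rw [hneg] at hchern
    refine le_trans hchern ?_
    rw [hrow (-t2) hcond2, hr2]
    rw [← ENNReal.ofReal_pow (by positivity), ← ENNReal.ofReal_mul (by positivity)]
    refine ENNReal.ofReal_le_ofReal ?_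
    have e1 : -t2 * (0:ℝ) ^ 2 / (1 / (1 - ε)) = 0 := by ring
    have e2 : (1:ℝ) / Real.sqrt (1 / (1 - ε)) = Real.sqrt (1 - ε) := by
      rw [one_div, one_div, Real.sqrt_inv, inv_inv]
    have e3 : -(t2 * -(1 - ε)) = (D' : ℝ) * (ε / 2) := by
      rw [ht2_def]; field_simp
    rw [e1, Real.exp_zero, e2, e3]
    have e4 : Real.exp ((D':ℝ) * (ε / 2)) = Real.exp (ε / 2) ^ D' := by
      rw [← Real.exp_nat_mul]
    have e5 : Real.exp (-(D' : ℝ) * (ε ^ 2 / 4 - ε ^ 3 / 6))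
        = Real.exp (-(ε ^ 2 / 4 - ε ^ 3 / 6)) ^ D' := by
      rw [← Real.exp_nat_mul]; congr 1; ring
    rw [e4, e5, ← mul_pow]
    refine pow_le_pow_left₀ (by positivity) ?_ D'
    have hkey := jl_key2 hε hε1
    have h6 : Real.sqrt ((1 - ε) * Real.exp ε)
        ≤ Real.exp ((-(ε ^ 2 / 2) + ε ^ 3 / 3) / 2) := by
      rw [Real.exp_half]
      exact Real.sqrt_le_sqrt hkey
    have h7 : Real.sqrt ((1 - ε) * Real.exp ε)
        = Real.exp (ε / 2) * Real.sqrt (1 - ε) := by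
      rw [Real.sqrt_mul h1ε.le, ← Real.exp_half]
      ring
    calc Real.exp (ε / 2) * Real.sqrt (1 - ε)
        ≤ Real.exp ((-(ε ^ 2 / 2) + ε ^ 3 / 3) / 2) := by rw [← h7]; exact h6
      _ ≤ Real.exp (-(ε ^ 2 / 4 - ε ^ 3 / 6)) := by
          apply Real.exp_le_exp.mpr; linarith
  calc μ {R | 1 + ε ≤ X R} + μ {R | -(1 - ε) ≤ -X R}
      ≤ ENNReal.ofReal (Real.exp (-(D' : ℝ) * (ε ^ 2 / 4 - ε ^ 3 / 6)))
        + ENNReal.ofReal (Real.exp (-(D' : ℝ) * (ε ^ 2 / 4 - ε ^ 3 / 6))) :=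
        add_le_add hbound1 hbound2
    _ = ENNReal.ofReal (2 * Real.exp (-(D' : ℝ) * (ε ^ 2 / 4 - ε ^ 3 / 6))) := by
        rw [← ENNReal.ofReal_add (Real.exp_pos _).le (Real.exp_pos _).le]
        congr 1
        ring
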